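/- Let T be an equivalence class of ∼ in S. Then all elements of T have the same multiset of run lengths: for every h ∈ T, run(h) = run(g⁺), where g⁺ is the unique Dyck vector in T. -/

import Mathlib

/-- An area vector: `g i.succ ≤ g i.castSucc + m` for all consecutive indices. -/
def IsAreaVec {n : ℕ} (m : ℝ) (g : Fin (n + 1) → ℝ) : Prop :=
  ∀ i : Fin n, g i.succ ≤ g i.castSucc + m

/-- The cycling operator `C(g₀,…,g_{n-1}) = (g₁,…,g_{n-1}, g₀ - c)`. -/
def cyc {n : ℕ} (c : ℝ) (g : Fin (n + 1) → ℝ) : Fin (n + 1) → ℝ :=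
  fun i => if h : (i : ℕ) + 1 < n + 1 then g ⟨(i : ℕ) + 1, h⟩ else g 0 - c

/-- The inverse cycling operator. -/
def cycInv {n : ℕ} (c : ℝ) (g : Fin (n + 1) → ℝ) : Fin (n + 1) → ℝ :=
  fun i => if 0 < (i : ℕ) then
      g ⟨(i : ℕ) - 1, Nat.lt_of_le_of_lt (Nat.sub_le _ _) i.isLt⟩
    else g (Fin.last n) + c

/-- Integer iterates `C^j` of the cycling operator. -/
def cycIter {n : ℕ} (c : ℝ) (j : ℤ) (g : Fin (n + 1) → ℝ) : Fin (n + 1) → ℝ :=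
  if 0 ≤ j then (cyc c)^[j.toNat] g else (cycInv c)^[(-j).toNat] g

/-- Membership in the set `S`: an area vector with values in `G`, `g 0 ≤ c`,
and last entry positive. -/
def MemS {n : ℕ} (G : AddSubgroup ℝ) (c m : ℝ) (g : Fin (n + 1) → ℝ) : Prop :=
  (∀ i, g i ∈ G) ∧ IsAreaVec m g ∧ g 0 ≤ c ∧ 0 < g (Fin.last n)

open Classical in
/-- The set of indices starting a run (runs: maximal blocks with `x (t+1) = x t + m`). -/
noncomputable def runStarts {n : ℕ} (m : ℝ) (x : Fin n → ℝ) : Finset (Fin n) :=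
  Finset.univ.filter (fun i : Fin n => (i : ℕ) = 0 ∨
    x i ≠ x ⟨(i : ℕ) - 1, Nat.lt_of_le_of_lt (Nat.sub_le _ _) i.isLt⟩ + m)

open Classical in
/-- The length of the run containing positions weakly after `i`. -/
noncomputable def runLen {n : ℕ} (m : ℝ) (x : Fin n → ℝ) (i : Fin n) : ℕ :=
  (Finset.univ.filter (fun j : Fin n => i ≤ j ∧
    ∀ t : ℕ, ∀ _h1 : (i : ℕ) ≤ t, ∀ h2 : t < (j : ℕ),
      x ⟨t + 1, Nat.lt_of_le_of_lt (Nat.succ_le_of_lt h2) j.isLt⟩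
        = x ⟨t, Nat.lt_trans h2 j.isLt⟩ + m)).card

/-- The multiset of run lengths of `x`. -/
noncomputable def runMultiset {n : ℕ} (m : ℝ) (x : Fin n → ℝ) : Multiset ℕ :=
  (runStarts m x).val.map (runLen m x)

namespace Stmt14Aux

variable {n : ℕ}

noncomputable def ext (c : ℝ) (g : Fin (n+1) → ℝ) (i : ℤ) : ℝ :=
  g ⟨(i % ((n:ℤ)+1)).toNat, by
      have h1 : 0 ≤ i % ((n:ℤ)+1) := Int.emod_nonneg _ (by positivity)
      have h2 : i % ((n:ℤ)+1) < (n:ℤ)+1 := Int.emod_lt_of_pos _ (by positivity)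
      omega⟩ - c * (((i / ((n:ℤ)+1)) : ℤ) : ℝ)

lemma emod_ediv_of (i q r : ℤ) (h : i = ((n:ℤ)+1)*q + r) (h0 : 0 ≤ r) (h1 : r < (n:ℤ)+1) :
    i % ((n:ℤ)+1) = r ∧ i / ((n:ℤ)+1) = q := by
  have := (Int.ediv_emod_unique (a := i) (b := (n:ℤ)+1) (q := q) (r := r)
    (by positivity)).mpr ⟨by linarith, h0, h1⟩
  exact ⟨this.2, this.1⟩

lemma ext_eq (c : ℝ) (g : Fin (n+1) → ℝ) (i : ℤ) (q : ℤ) (r : ℕ) (hr : r < n+1)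
    (h : i = ((n:ℤ)+1)*q + r) : ext c g i = g ⟨r, hr⟩ - c * ((q:ℤ):ℝ) := by
  obtain ⟨h1, h2⟩ := emod_ediv_of i q r h (by positivity) (by exact_mod_cast hr)
  have h3 : (i % ((n:ℤ)+1)).toNat = r := by omega
  unfold ext
  rw [h2]
  congr 1
  exact congrArg g (Fin.ext h3)

lemma exists_decomp (i : ℤ) : ∃ (q : ℤ) (r : ℕ) (hr : r < n+1), i = ((n:ℤ)+1)*q + r := by
  have h1 := Int.mul_ediv_add_emod i ((n:ℤ)+1)
  have h2 : 0 ≤ i % ((n:ℤ)+1) := Int.emod_nonneg _ (by positivity)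
  have h3 : i % ((n:ℤ)+1) < (n:ℤ)+1 := Int.emod_lt_of_pos _ (by positivity)
  exact ⟨i / ((n:ℤ)+1), (i % ((n:ℤ)+1)).toNat, by omega, by omega⟩

lemma ext_coe (c : ℝ) (g : Fin (n+1) → ℝ) (t : ℕ) (ht : t < n+1) :
    ext c g (t : ℤ) = g ⟨t, ht⟩ := by
  rw [ext_eq c g (t:ℤ) 0 t ht (by push_cast; ring)]
  simp

lemma ext_add_period (c : ℝ) (g : Fin (n+1) → ℝ) (i : ℤ) :
    ext c g (i + ((n:ℤ)+1)) = ext c g i - c := by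
  rw [show i + ((n:ℤ)+1) = i + ((n:ℤ)+1) from rfl]
  obtain ⟨q, r, hr, hi⟩ := exists_decomp i
  rw [ext_eq c g i q r hr hi, ext_eq c g _ (q+1) r hr (by rw [hi]; ring)]
  push_cast
  ring

lemma ext_cyc (c : ℝ) (g : Fin (n+1) → ℝ) (i : ℤ) :
    ext c (cyc c g) i = ext c g (i + 1) := by
  obtain ⟨q, r, hr, hi⟩ := exists_decomp i
  rcases Nat.lt_or_ge r n with h | h
  · rw [ext_eq c (cyc c g) i q r hr hi,
      ext_eq c g (i+1) q (r+1) (by omega) (by rw [hi]; push_cast; ring)]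
    have : cyc c g ⟨r, hr⟩ = g ⟨r+1, by omega⟩ := by
      show dite _ _ _ = _
      rw [dif_pos (show r + 1 < n + 1 by omega)]
    rw [this]
  · have hrn : r = n := by omega
    rw [ext_eq c (cyc c g) i q r hr hi,
      ext_eq c g (i+1) (q+1) 0 (by omega) (by rw [hi, hrn]; push_cast; ring)]
    have h4 : cyc c g ⟨r, hr⟩ = g 0 - c := by
      show dite _ _ _ = _
      rw [dif_neg (show ¬ (r + 1 < n + 1) by omega)]
    rw [h4]
    have h5 : (⟨0, by omega⟩ : Fin (n+1)) = 0 := rfl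
    rw [h5]
    push_cast
    ring

lemma cyc_cycInv (c : ℝ) (g : Fin (n+1) → ℝ) : cyc c (cycInv c g) = g := by
  funext i
  by_cases hi : (i : ℕ) + 1 < n + 1
  · show dite _ _ _ = _
    rw [dif_pos hi]
    show ite _ _ _ = _
    rw [if_pos (show 0 < (i:ℕ) + 1 by omega)]
    exact congrArg g (Fin.ext rfl)
  · have h0 : cycInv c g 0 = g (Fin.last n) + c := by
      show ite _ _ _ = _
      rw [if_neg (show ¬ (0 < ((0 : Fin (n+1)) : ℕ)) by simp)]
    show dite _ _ _ = _
    rw [dif_neg hi, h0]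
    have : i = Fin.last n := Fin.ext (by have := i.isLt; simp [Fin.last]; omega)
    rw [this]
    ring

lemma ext_cycInv (c : ℝ) (g : Fin (n+1) → ℝ) (i : ℤ) :
    ext c (cycInv c g) i = ext c g (i - 1) := by
  have h := ext_cyc c (cycInv c g) (i - 1)
  rw [cyc_cycInv, sub_add_cancel] at h
  exact h.symm

lemma ext_iter_cyc (c : ℝ) (g : Fin (n+1) → ℝ) (k : ℕ) (i : ℤ) :
    ext c ((cyc c)^[k] g) i = ext c g (i + k) := by
  induction k generalizing i with
  | zero => simp
  | succ k ih =>
    rw [Function.iterate_succ_apply', ext_cyc, ih]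
    congr 1
    push_cast
    ring

lemma ext_iter_cycInv (c : ℝ) (g : Fin (n+1) → ℝ) (k : ℕ) (i : ℤ) :
    ext c ((cycInv c)^[k] g) i = ext c g (i - k) := by
  induction k generalizing i with
  | zero => simp
  | succ k ih =>
    rw [Function.iterate_succ_apply', ext_cycInv, ih]
    congr 1
    push_cast
    ring

lemma ext_cycIter (c : ℝ) (g : Fin (n+1) → ℝ) (j : ℤ) (i : ℤ) :
    ext c (cycIter c j g) i = ext c g (i + j) := by
  unfold cycIter
  split_ifs with hj
  · rw [ext_iter_cyc]
    congr 1
    omega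
  · rw [ext_iter_cycInv]
    congr 1
    omega

/-- The cyclic pattern: position `t` is an `m`-step. -/
def Q (c m : ℝ) (x : Fin (n+1) → ℝ) (t : ℤ) : Prop :=
  ext c x (t+1) = ext c x t + m

lemma Q_period (c m : ℝ) (x : Fin (n+1) → ℝ) (t : ℤ) :
    Q c m x (t + ((n:ℤ)+1)) ↔ Q c m x t := by
  unfold Q
  rw [show t + ((n:ℤ)+1) + 1 = (t+1) + ((n:ℤ)+1) by ring, ext_add_period, ext_add_period]
  constructor <;> intro h <;> linarith

lemma Q_congr (c m : ℝ) (x : Fin (n+1) → ℝ) {t s : ℤ}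
    (h : t % ((n:ℤ)+1) = s % ((n:ℤ)+1)) : Q c m x t ↔ Q c m x s := by
  have hd : ((n:ℤ)+1) ∣ s - t := Int.ModEq.dvd h
  obtain ⟨q, hq⟩ := hd
  have hs : s = t + ((n:ℤ)+1) * q := by linarith
  subst hs
  clear h hq
  induction q using Int.induction_on with
  | zero => simp
  | succ k ih =>
    rw [show t + ((n:ℤ)+1)*((k:ℤ)+1) = (t + ((n:ℤ)+1)*(k:ℤ)) + ((n:ℤ)+1) by ring, Q_period]
    exact ih
  | pred k ih =>
    have h2 := Q_period c m x (t + ((n:ℤ)+1)*(-(k:ℤ)-1))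
    rw [show t + ((n:ℤ)+1)*(-(k:ℤ)-1) + ((n:ℤ)+1) = t + ((n:ℤ)+1)*(-(k:ℤ)) by ring] at h2
    exact ih.trans h2

lemma Q_last (c m : ℝ) (x : Fin (n+1) → ℝ) (hm : 0 ≤ m) (h0 : x 0 ≤ c)
    (hl : 0 < x (Fin.last n)) : ¬ Q c m x (n : ℤ) := by
  unfold Q
  rw [show (n:ℤ)+1 = 0 + ((n:ℤ)+1) by ring, ext_add_period,
    show (0:ℤ) = ((0:ℕ):ℤ) by norm_num, ext_coe c x 0 (by omega),
    ext_coe c x n (by omega)]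
  have e0 : (⟨0, by omega⟩ : Fin (n+1)) = 0 := rfl
  have e1 : (⟨n, by omega⟩ : Fin (n+1)) = Fin.last n := rfl
  rw [e0, e1]
  intro hq
  linarith

lemma Q_window (c m : ℝ) (x : Fin (n+1) → ℝ) (t : ℕ) (ht : t < n) :
    Q c m x (t : ℤ) ↔ x ⟨t+1, by omega⟩ = x ⟨t, by omega⟩ + m := by
  unfold Q
  have h1 := ext_coe c x (t+1) (by omega)
  push_cast at h1
  rw [h1, ext_coe c x t (by omega)]


lemma runStarts_mem (c m : ℝ) (x : Fin (n+1) → ℝ) (hm : 0 ≤ m) (h0 : x 0 ≤ c)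
    (hl : 0 < x (Fin.last n)) (i : Fin (n+1)) :
    i ∈ runStarts m x ↔ ¬ Q c m x (((i:ℕ):ℤ) - 1) := by
  classical
  unfold runStarts
  rw [Finset.mem_filter]
  simp only [Finset.mem_univ, true_and]
  rcases Nat.eq_zero_or_pos (i : ℕ) with h | h
  · have e1 : (((i:ℕ):ℤ) - 1) % ((n:ℤ)+1) = (n:ℤ) % ((n:ℤ)+1) := by
      have hz : ((i:ℕ):ℤ) = 0 := by exact_mod_cast h
      rw [hz]
      rw [(emod_ediv_of (0 - 1) (-1) (n:ℤ) (by ring) (by omega) (by omega)).1,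
        (emod_ediv_of (n:ℤ) 0 (n:ℤ) (by ring) (by omega) (by omega)).1]
    have hQ : ¬ Q c m x (((i:ℕ):ℤ) - 1) := by
      rw [Q_congr c m x e1]
      exact Q_last c m x hm h0 hl
    exact ⟨fun _ => hQ, fun _ => Or.inl h⟩
  · have hk : (i:ℕ) - 1 < n := by omega
    have e2 : ((i:ℕ):ℤ) - 1 = (((i:ℕ) - 1 : ℕ):ℤ) := by omega
    rw [e2, Q_window c m x ((i:ℕ)-1) hk]
    have e3 : (⟨(i:ℕ) - 1 + 1, by omega⟩ : Fin (n+1)) = i := Fin.ext (by simp; omega)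
    rw [e3]
    constructor
    · rintro (h' | h') hq
      · omega
      · exact h' hq
    · intro h'
      exact Or.inr h'

lemma runLen_char (c m : ℝ) (x : Fin (n+1) → ℝ) (hm : 0 ≤ m) (h0 : x 0 ≤ c)
    (hl : 0 < x (Fin.last n)) (i : Fin (n+1)) (K : ℕ)
    (hKs : ¬ Q c m x (((i:ℕ):ℤ) + K)) (hKm : ∀ k < K, Q c m x (((i:ℕ):ℤ) + k)) :
    runLen m x i = K + 1 := by
  classical
  have hKle : (i:ℕ) + K ≤ n := by
    by_contra hcon
    have h1 := hKm (n - (i:ℕ)) (by omega)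
    rw [show ((i:ℕ):ℤ) + ((n - (i:ℕ) : ℕ):ℤ) = (n:ℤ) by
      have := i.isLt; omega] at h1
    exact Q_last c m x hm h0 hl h1
  have hcard : (Finset.Icc i (⟨(i:ℕ) + K, by omega⟩ : Fin (n+1))).card = K + 1 := by
    rw [Fin.card_Icc]
    simp
    omega
  rw [← hcard]
  unfold runLen
  refine congrArg Finset.card ?_
  ext j
  rw [Finset.mem_filter, Finset.mem_Icc]
  simp only [Finset.mem_univ, true_and]
  constructor
  · rintro ⟨hij, hedge⟩
    refine ⟨hij, ?_⟩
    rw [Fin.le_def]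
    simp only
    by_contra hcon
    push_neg at hcon
    have hlt : (i:ℕ) + K < (j:ℕ) := hcon
    have hed := hedge ((i:ℕ) + K) (by omega) (by omega)
    apply hKs
    rw [show ((i:ℕ):ℤ) + (K:ℤ) = (((i:ℕ) + K : ℕ):ℤ) by push_cast; ring,
      Q_window c m x ((i:ℕ) + K) (by have := j.isLt; omega)]
    exact hed
  · rintro ⟨hij, hjK⟩
    have hjK' : (j:ℕ) ≤ (i:ℕ) + K := hjK
    refine ⟨hij, ?_⟩
    intro t ht1 ht2
    have hq := hKm (t - (i:ℕ)) (by omega)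
    rw [show ((i:ℕ):ℤ) + ((t - (i:ℕ) : ℕ):ℤ) = (t:ℤ) by omega,
      Q_window c m x t (by have := j.isLt; omega)] at hq
    exact hq

lemma Q_cycIter (c m : ℝ) (g : Fin (n+1) → ℝ) (j : ℤ) (t : ℤ) :
    Q c m (cycIter c j g) t ↔ Q c m g (t + j) := by
  unfold Q
  rw [ext_cycIter, ext_cycIter, show t + 1 + j = t + j + 1 by ring]

end Stmt14Aux

open Stmt14Aux

/-- all elements of an equivalence class of `∼` in `S` have the same
multiset of run lengths as the unique Dyck vector `g⁺` of the class. -/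
theorem stmt14 (n : ℕ) (G : AddSubgroup ℝ) (c m : ℝ)
    (hcG : c ∈ G) (hmG : m ∈ G) (hc : 0 < c) (hm : 0 ≤ m)
    (gplus : Fin (n + 1) → ℝ) (hgplus : MemS G c m gplus)
    (hDyck : ∀ i, 0 < gplus i)
    (h : Fin (n + 1) → ℝ) (hh : MemS G c m h) (hsim : ∃ j : ℤ, h = cycIter c j gplus) :
    runMultiset m h = runMultiset m gplus := by
  classical
  obtain ⟨j, hj⟩ := hsim
  obtain ⟨-, -, hh0, hhl⟩ := hh
  obtain ⟨-, -, hg0, hgl⟩ := hgplus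
  -- the rotation element
  have haux : (0:ℤ) ≤ j % ((n:ℤ)+1) := Int.emod_nonneg _ (by positivity)
  have haux2 : j % ((n:ℤ)+1) < (n:ℤ)+1 := Int.emod_lt_of_pos _ (by positivity)
  set a : Fin (n+1) := ⟨(j % ((n:ℤ)+1)).toNat, by omega⟩ with ha
  -- key congruence: (i + a) ≡ i + j  mod (n+1)
  have key2 : ∀ i : Fin (n+1), (((i + a : Fin (n+1)) : ℕ) : ℤ) % ((n:ℤ)+1)
      = (((i:ℕ):ℤ) + j) % ((n:ℤ)+1) := by
    intro i
    have hva : ((i + a : Fin (n+1)) : ℕ) = ((i:ℕ) + (a:ℕ)) % (n+1) := Fin.val_add i a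
    have hva' : (((i + a : Fin (n+1)) : ℕ) : ℤ) = (((i:ℕ) + (a:ℕ) : ℕ) : ℤ) % ((n:ℤ)+1) := by
      rw [hva]
      push_cast
      rfl
    have hav : ((a:ℕ):ℤ) = j % ((n:ℤ)+1) := by
      simp only [ha]
      exact Int.toNat_of_nonneg haux
    rw [hva', Int.emod_emod_of_dvd _ dvd_rfl]
    push_cast
    rw [hav, Int.emod_def j ((n:ℤ)+1),
      show ((i:ℕ):ℤ) + (j - ((n:ℤ)+1) * (j / ((n:ℤ)+1)))
        = (((i:ℕ):ℤ) + j) + ((n:ℤ)+1) * (-(j / ((n:ℤ)+1))) by ring,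
      Int.add_mul_emod_self_left]
  have key1 : ∀ t : ℤ, Q c m h t ↔ Q c m gplus (t + j) := by
    intro t
    rw [hj]
    exact Q_cycIter c m gplus j t
  have key3 : ∀ i : Fin (n+1), runLen m h i = runLen m gplus (i + a) := by
    intro i
    have hex : ∃ k : ℕ, ¬ Q c m h (((i:ℕ):ℤ) + k) := by
      refine ⟨n - (i:ℕ), ?_⟩
      rw [show ((i:ℕ):ℤ) + ((n - (i:ℕ) : ℕ):ℤ) = (n:ℤ) by have := i.isLt; omega]
      exact Q_last c m h hm hh0 hhl
    set K := Nat.find hex with hK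
    have hKs : ¬ Q c m h (((i:ℕ):ℤ) + K) := Nat.find_spec hex
    have hKm : ∀ k < K, Q c m h (((i:ℕ):ℤ) + k) := fun k hk =>
      not_not.mp (Nat.find_min hex hk)
    have htrans : ∀ k : ℕ, (Q c m h (((i:ℕ):ℤ) + k) ↔
        Q c m gplus ((((i + a : Fin (n+1)):ℕ):ℤ) + k)) := by
      intro k
      rw [key1]
      apply Q_congr
      have := key2 i
      calc (((i:ℕ):ℤ) + k + j) % ((n:ℤ)+1)
          = ((((i:ℕ):ℤ) + j) + k) % ((n:ℤ)+1) := by ring_nf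
        _ = (((((i + a : Fin (n+1)):ℕ):ℤ)) + k) % ((n:ℤ)+1) := by
            rw [Int.add_emod ((((i:ℕ):ℤ) + j)) k, ← this, ← Int.add_emod]
    rw [runLen_char c m h hm hh0 hhl i K hKs hKm,
      runLen_char c m gplus hm hg0 hgl (i + a) K
        (fun hq => hKs ((htrans K).mpr hq))
        (fun k hk => (htrans k).mp (hKm k hk))]
  have hmem : ∀ i : Fin (n+1), i ∈ runStarts m h ↔ (i + a) ∈ runStarts m gplus := by
    intro i
    rw [runStarts_mem c m h hm hh0 hhl i, runStarts_mem c m gplus hm hg0 hgl (i + a),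
      key1]
    apply not_congr
    apply Q_congr
    have := key2 i
    calc (((i:ℕ):ℤ) - 1 + j) % ((n:ℤ)+1)
        = ((((i:ℕ):ℤ) + j) + (-1)) % ((n:ℤ)+1) := by ring_nf
      _ = (((((i + a : Fin (n+1)):ℕ):ℤ)) + (-1)) % ((n:ℤ)+1) := by
          rw [Int.add_emod ((((i:ℕ):ℤ) + j)) (-1), ← this, ← Int.add_emod]
      _ = ((((i + a : Fin (n+1)):ℕ):ℤ) - 1) % ((n:ℤ)+1) := by ring_nf
  have hmap : Finset.map (Equiv.addRight a).toEmbedding (runStarts m h)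
      = runStarts m gplus := by
    ext y
    rw [Finset.mem_map_equiv]
    rw [hmem ((Equiv.addRight a).symm y)]
    have hy : (Equiv.addRight a).symm y + a = y := by simp
    rw [hy]
  unfold runMultiset
  rw [← hmap, Finset.map_val, Multiset.map_map]
  apply Multiset.map_congr rfl
  intro i _
  simpa using key3 i
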